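/- Let f : [0,∞) → V be a bounded measurable function into a separable Banach space satisfying, for some L ∈ V: ess-lim_{t→0+} limsup_{b→∞} ‖(1/b) ∑_{0 < n ≤ b} f(nt) − L‖ = 0. Then lim_{b→∞} (1/b) ∫_0^b f(x) dx = L. -/

import Mathlib

open MeasureTheory Filter Topology

namespace Stmt14Aux

variable {V : Type*} [NormedAddCommGroup V] [NormedSpace ℝ V]
  [CompleteSpace V] [SecondCountableTopology V]

set_option linter.unusedSectionVars false

noncomputable def F (f : ℝ → V) (b : ℝ) : V := ∫ x in Set.Ioc (0:ℝ) b, f x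

noncomputable def g (f : ℝ → V) (b : ℝ) : V := b⁻¹ • F f b

theorem integrableOn_of_bdd {f : ℝ → V} (hmeas : StronglyMeasurable f) {M : ℝ}
    (hbd : ∀ x, ‖f x‖ ≤ M) {s : Set ℝ} (hs : volume s ≠ ⊤) : IntegrableOn f s := by
  have hc : IntegrableOn (fun _ : ℝ => M) s := integrableOn_const hs
  exact hc.mono' hmeas.aestronglyMeasurable (Filter.Eventually.of_forall fun x => hbd x)

theorem norm_F_sub {f : ℝ → V} (hmeas : StronglyMeasurable f) {M : ℝ}
    (hbd : ∀ x, ‖f x‖ ≤ M) {a b : ℝ} (h0 : 0 ≤ a) (hab : a ≤ b) :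
    ‖F f b - F f a‖ ≤ M * (b - a) := by
  have hsplit : F f b = F f a + ∫ x in Set.Ioc a b, f x := by
    rw [F, F, ← Set.Ioc_union_Ioc_eq_Ioc h0 hab]
    exact setIntegral_union (Set.Ioc_disjoint_Ioc_of_le le_rfl) measurableSet_Ioc
      (integrableOn_of_bdd hmeas hbd (by simp [Real.volume_Ioc]))
      (integrableOn_of_bdd hmeas hbd (by simp [Real.volume_Ioc]))
  have : ‖∫ x in Set.Ioc a b, f x‖ ≤ M * (volume (Set.Ioc a b)).toReal :=
    norm_setIntegral_le_of_norm_le_const measure_Ioc_lt_top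
      (fun x _ => hbd x)
  rw [hsplit]
  simpa [Real.volume_Ioc, ENNReal.toReal_ofReal (sub_nonneg.2 hab)] using this

theorem norm_F {f : ℝ → V} (hmeas : StronglyMeasurable f) {M : ℝ}
    (hbd : ∀ x, ‖f x‖ ≤ M) {b : ℝ} (hb : 0 ≤ b) : ‖F f b‖ ≤ M * b := by
  have h0 : F f 0 = 0 := by simp [F]
  simpa [h0] using norm_F_sub hmeas hbd le_rfl hb

theorem g_lip {f : ℝ → V} (hmeas : StronglyMeasurable f) {M : ℝ}
    (hbd : ∀ x, ‖f x‖ ≤ M) {s s' : ℝ} (hs : 0 < s) (hss' : s ≤ s') :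
    ‖g f s' - g f s‖ ≤ 2 * M * (s' - s) / s := by
  have hM : 0 ≤ M := le_trans (norm_nonneg _) (hbd 0)
  have hs' : 0 < s' := hs.trans_le hss'
  have hdecomp : g f s' - g f s = s'⁻¹ • (F f s' - F f s) + (s'⁻¹ - s⁻¹) • F f s := by
    rw [g, g]; rw [smul_sub, sub_smul]; abel
  have h1 : ‖s'⁻¹ • (F f s' - F f s)‖ ≤ s'⁻¹ * (M * (s' - s)) := by
    rw [norm_smul, Real.norm_eq_abs, abs_of_pos (inv_pos.2 hs')]
    exact mul_le_mul_of_nonneg_left (norm_F_sub hmeas hbd hs.le hss') (inv_pos.2 hs').le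
  have h2 : ‖(s'⁻¹ - s⁻¹) • F f s‖ ≤ (s⁻¹ - s'⁻¹) * (M * s) := by
    rw [norm_smul, Real.norm_eq_abs, abs_of_nonpos (by
      have := inv_anti₀ hs hss'
      linarith)]
    have h3 : -(s'⁻¹ - s⁻¹) = s⁻¹ - s'⁻¹ := by ring
    rw [h3]
    exact mul_le_mul_of_nonneg_left (norm_F hmeas hbd hs.le) (by
      have := inv_anti₀ hs hss'; linarith)
  calc ‖g f s' - g f s‖ ≤ ‖s'⁻¹ • (F f s' - F f s)‖ + ‖(s'⁻¹ - s⁻¹) • F f s‖ := by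
        rw [hdecomp]; exact norm_add_le _ _
    _ ≤ s'⁻¹ * (M * (s' - s)) + (s⁻¹ - s'⁻¹) * (M * s) := add_le_add h1 h2
    _ ≤ 2 * M * (s' - s) / s := by
        rw [div_eq_mul_inv]
        have e1 : s'⁻¹ ≤ s⁻¹ := inv_anti₀ hs hss'
        have e2 : (s⁻¹ - s'⁻¹) * (M * s) = M * (s' - s) * (s'⁻¹ * (s * s⁻¹)) := by
          field_simp
        have hs0 : s * s⁻¹ = 1 := mul_inv_cancel₀ hs.ne'
        rw [e2, hs0, mul_one]
        have : s'⁻¹ * (M * (s' - s)) ≤ s⁻¹ * (M * (s' - s)) :=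
          mul_le_mul_of_nonneg_right e1 (by nlinarith)
        nlinarith [mul_nonneg (mul_nonneg hM (sub_nonneg.2 hss')) (inv_pos.2 hs).le,
          mul_le_mul_of_nonneg_right e1 (mul_nonneg hM (sub_nonneg.2 hss'))]


theorem scale (f : ℝ → V) {n : ℕ} (hn : 0 < n) {δ : ℝ} (hδ : 0 < δ) :
    ∫ t in Set.Ioc (0:ℝ) δ, f ((n:ℝ) * t) = (n:ℝ)⁻¹ • F f ((n:ℝ) * δ) := by
  have hn0 : (0:ℝ) < (n:ℝ) := Nat.cast_pos.2 hn
  have h1 : ∫ t in Set.Ioc (0:ℝ) δ, f ((n:ℝ) * t) = ∫ t in (0:ℝ)..δ, f ((n:ℝ) * t) :=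
    (intervalIntegral.integral_of_le hδ.le).symm
  rw [h1, intervalIntegral.integral_comp_mul_left f hn0.ne']
  rw [mul_zero, intervalIntegral.integral_of_le (by positivity)]
  rfl

theorem stepB (f : ℝ → V) (hmeas : StronglyMeasurable f) {M : ℝ}
    (hbd : ∀ x, ‖f x‖ ≤ M) (L : V) {ε δ : ℝ} (hε : 0 < ε) (hδ : 0 < δ)
    (hae : ∀ᵐ t ∂(volume.restrict (Set.Ioo (0:ℝ) δ)),
      limsup (fun b : ℝ => ‖b⁻¹ • ∑ n ∈ Finset.Ioc 0 ⌊b⌋₊, f (n * t) - L‖) atTop < ε/2) :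
    ∀ᶠ N : ℕ in atTop,
      ‖(N:ℝ)⁻¹ • ∑ n ∈ Finset.Ioc 0 N, g f ((n:ℝ) * δ) - L‖ < ε := by
  have hM : 0 ≤ M := le_trans (norm_nonneg _) (hbd 0)
  set X : ℕ → ℝ → V := fun N t => (N:ℝ)⁻¹ • (∑ n ∈ Finset.Ioc 0 N, f ((n:ℝ) * t)) - L with hX
  have hvol : volume (Set.Ioo (0:ℝ) δ) ≠ ⊤ := by simp
  -- bounds
  have hSbd : ∀ (t : ℝ) (N : ℕ), ‖∑ n ∈ Finset.Ioc 0 N, f ((n:ℝ) * t)‖ ≤ N * M := by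
    intro t N
    calc ‖∑ n ∈ Finset.Ioc 0 N, f ((n:ℝ) * t)‖ ≤ ∑ n ∈ Finset.Ioc 0 N, ‖f ((n:ℝ) * t)‖ :=
        norm_sum_le _ _
      _ ≤ ∑ n ∈ Finset.Ioc 0 N, M := Finset.sum_le_sum fun n _ => hbd _
      _ = N * M := by simp [Nat.card_Ioc]
  have hsmulbd : ∀ (c : ℝ) (t : ℝ) (N : ℕ), |c| * N ≤ 1 →
      ‖c • (∑ n ∈ Finset.Ioc 0 N, f ((n:ℝ) * t)) - L‖ ≤ M + ‖L‖ := by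
    intro c t N hc
    have h1 : ‖c • (∑ n ∈ Finset.Ioc 0 N, f ((n:ℝ) * t))‖ ≤ M := by
      rw [norm_smul, Real.norm_eq_abs]
      calc |c| * ‖∑ n ∈ Finset.Ioc 0 N, f ((n:ℝ) * t)‖ ≤ |c| * (N * M) :=
          mul_le_mul_of_nonneg_left (hSbd t N) (abs_nonneg c)
        _ = |c| * N * M := by ring
        _ ≤ 1 * M := mul_le_mul_of_nonneg_right hc hM
        _ = M := one_mul M
    calc ‖c • (∑ n ∈ Finset.Ioc 0 N, f ((n:ℝ) * t)) - L‖
        ≤ ‖c • (∑ n ∈ Finset.Ioc 0 N, f ((n:ℝ) * t))‖ + ‖L‖ := norm_sub_le _ _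
      _ ≤ M + ‖L‖ := add_le_add_left h1 _
  have hinvN : ∀ N : ℕ, |((N:ℝ))⁻¹| * (N:ℝ) ≤ 1 := by
    intro N
    rcases Nat.eq_zero_or_pos N with h | h
    · simp [h]
    · have : (0:ℝ) < N := Nat.cast_pos.2 h
      rw [abs_of_nonneg (inv_nonneg.2 this.le), inv_mul_cancel₀ this.ne']
  have hXbd : ∀ (N : ℕ) (t : ℝ), ‖X N t‖ ≤ M + ‖L‖ := fun N t =>
    hsmulbd _ t N (hinvN N)
  -- pointwise convergence
  have hptwise : ∀ᵐ t ∂(volume.restrict (Set.Ioo (0:ℝ) δ)),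
      ∀ᶠ N : ℕ in atTop, ‖X N t‖ < ε/2 := by
    filter_upwards [hae] with t ht
    have hbound : IsBoundedUnder (· ≤ ·) atTop
        (fun b : ℝ => ‖b⁻¹ • ∑ n ∈ Finset.Ioc 0 ⌊b⌋₊, f (n * t) - L‖) := by
      refine isBoundedUnder_of ⟨M + ‖L‖, fun b => ?_⟩
      apply hsmulbd
      rcases Nat.eq_zero_or_pos ⌊b⌋₊ with h | h
      · simp [h]
      · have hb1 : (1:ℝ) ≤ b := (Nat.one_le_floor_iff b).1 h
        have hfl : ((⌊b⌋₊ : ℕ) : ℝ) ≤ b := Nat.floor_le (by linarith)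
        have hbpos : (0:ℝ) < b := by linarith
        calc |b⁻¹| * (⌊b⌋₊ : ℝ) ≤ b⁻¹ * b := by
              rw [abs_of_nonneg (inv_nonneg.2 hbpos.le)]
              exact mul_le_mul_of_nonneg_left hfl (inv_nonneg.2 hbpos.le)
          _ = 1 := inv_mul_cancel₀ hbpos.ne'
    have hev := eventually_lt_of_limsup_lt ht hbound
    have h2 := (tendsto_natCast_atTop_atTop (R := ℝ)).eventually hev
    simpa [hX, Nat.floor_natCast] using h2
  -- measurability and integrability
  have hXmeas : ∀ N, StronglyMeasurable (X N) := by
    intro N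
    apply StronglyMeasurable.sub _ stronglyMeasurable_const
    apply StronglyMeasurable.const_smul
    exact Finset.stronglyMeasurable_fun_sum _ fun n _ =>
      hmeas.comp_measurable (measurable_const_mul _)
  have hXint : ∀ N, IntegrableOn (X N) (Set.Ioo (0:ℝ) δ) := fun N =>
    integrableOn_of_bdd (hXmeas N) (hXbd N) hvol
  have hmaxbd : ∀ (N : ℕ) (t : ℝ), ‖max (‖X N t‖ - ε/2) 0‖ ≤ M + ‖L‖ := by
    intro N t
    rw [Real.norm_eq_abs, abs_of_nonneg (le_max_right _ _)]
    exact max_le (by linarith [hXbd N t]) (by positivity)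
  have hmaxmeas : ∀ N, StronglyMeasurable (fun t => max (‖X N t‖ - ε/2) 0) := by
    intro N
    exact (((hXmeas N).norm.measurable.sub measurable_const).max measurable_const).stronglyMeasurable
  have hmaxint : ∀ N, IntegrableOn (fun t => max (‖X N t‖ - ε/2) 0) (Set.Ioo (0:ℝ) δ) :=
    fun N => integrableOn_of_bdd (hmaxmeas N) (hmaxbd N) hvol
  -- DCT
  set u : ℕ → ℝ := fun N => ∫ t in Set.Ioo (0:ℝ) δ, max (‖X N t‖ - ε/2) 0 with hu
  have hu0 : Tendsto u atTop (𝓝 0) := by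
    have hdct := tendsto_integral_of_dominated_convergence
      (μ := volume.restrict (Set.Ioo (0:ℝ) δ))
      (F := fun N t => max (‖X N t‖ - ε/2) 0) (f := fun _ => (0:ℝ))
      (bound := fun _ => M + ‖L‖)
      (fun N => (hmaxmeas N).aestronglyMeasurable)
      (integrableOn_const hvol)
      (fun N => Filter.Eventually.of_forall fun t => hmaxbd N t)
      (by
        filter_upwards [hptwise] with t ht
        apply tendsto_const_nhds.congr'
        filter_upwards [ht] with N hN
        exact (max_eq_right (by linarith)).symm)
    simpa using hdct
  -- value of the integral
  have hfn_int : ∀ n : ℕ, IntegrableOn (fun t => f ((n:ℝ) * t)) (Set.Ioc (0:ℝ) δ) :=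
    fun n => integrableOn_of_bdd (hmeas.comp_measurable (measurable_const_mul _))
      (fun x => hbd _) (by simp)
  have hXval : ∀ N : ℕ, ∫ t in Set.Ioo (0:ℝ) δ, X N t
      = (N:ℝ)⁻¹ • (∑ n ∈ Finset.Ioc 0 N, (n:ℝ)⁻¹ • F f ((n:ℝ) * δ)) - δ • L := by
    intro N
    have hm1 : StronglyMeasurable
        (fun t => (N:ℝ)⁻¹ • (∑ n ∈ Finset.Ioc 0 N, f ((n:ℝ) * t))) := by
      apply StronglyMeasurable.const_smul
      exact Finset.stronglyMeasurable_fun_sum _ fun n _ =>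
        hmeas.comp_measurable (measurable_const_mul _)
    have hb1 : ∀ t, ‖(N:ℝ)⁻¹ • (∑ n ∈ Finset.Ioc 0 N, f ((n:ℝ) * t))‖ ≤ M := by
      intro t
      rw [norm_smul, Real.norm_eq_abs]
      calc |((N:ℝ))⁻¹| * ‖∑ n ∈ Finset.Ioc 0 N, f ((n:ℝ) * t)‖
          ≤ |((N:ℝ))⁻¹| * (N * M) := mul_le_mul_of_nonneg_left (hSbd t N) (abs_nonneg _)
        _ = |((N:ℝ))⁻¹| * N * M := by ring
        _ ≤ 1 * M := mul_le_mul_of_nonneg_right (hinvN N) hM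
        _ = M := one_mul M
    have hsum_int : IntegrableOn
        (fun t => (N:ℝ)⁻¹ • (∑ n ∈ Finset.Ioc 0 N, f ((n:ℝ) * t))) (Set.Ioo (0:ℝ) δ) :=
      integrableOn_of_bdd hm1 hb1 hvol
    have hLint : IntegrableOn (fun _ : ℝ => L) (Set.Ioo (0:ℝ) δ) :=
      integrableOn_const hvol
    simp only [hX]
    rw [integral_sub hsum_int hLint, integral_smul, setIntegral_const]
    congr 1
    · congr 1
      rw [← integral_Ioc_eq_integral_Ioo]
      rw [integral_finset_sum _ fun n hn => hfn_int n]
      exact Finset.sum_congr rfl fun n hn => scale f (Finset.mem_Ioc.1 hn).1 hδ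
    · rw [Real.volume_real_Ioo_of_le hδ.le, sub_zero]
  -- identify with A N
  have hAeq : ∀ N : ℕ, (N:ℝ)⁻¹ • (∑ n ∈ Finset.Ioc 0 N, g f ((n:ℝ) * δ)) - L
      = δ⁻¹ • ∫ t in Set.Ioo (0:ℝ) δ, X N t := by
    intro N
    have hterm : ∀ n ∈ Finset.Ioc 0 N, g f ((n:ℝ) * δ) = δ⁻¹ • ((n:ℝ)⁻¹ • F f ((n:ℝ) * δ)) :=
      fun n _ => by rw [g, smul_smul, mul_inv, mul_comm]
    rw [Finset.sum_congr rfl hterm, ← Finset.smul_sum, hXval N, smul_sub,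
      smul_comm δ⁻¹ ((N:ℝ)⁻¹), smul_smul δ⁻¹ δ, inv_mul_cancel₀ hδ.ne', one_smul]
  -- final bound
  have hnorm_le : ∀ N : ℕ, ‖(N:ℝ)⁻¹ • (∑ n ∈ Finset.Ioc 0 N, g f ((n:ℝ) * δ)) - L‖
      ≤ δ⁻¹ * (u N + ε/2 * δ) := by
    intro N
    rw [hAeq N, norm_smul, Real.norm_eq_abs, abs_of_nonneg (inv_nonneg.2 hδ.le)]
    apply mul_le_mul_of_nonneg_left _ (inv_nonneg.2 hδ.le)
    calc ‖∫ t in Set.Ioo (0:ℝ) δ, X N t‖ ≤ ∫ t in Set.Ioo (0:ℝ) δ, ‖X N t‖ :=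
        norm_integral_le_integral_norm _
      _ ≤ ∫ t in Set.Ioo (0:ℝ) δ, (max (‖X N t‖ - ε/2) 0 + ε/2) := by
          apply integral_mono (hXint N).norm
          · exact (hmaxint N).add (integrableOn_const hvol)
          · intro t
            have := le_max_left (‖X N t‖ - ε/2) 0
            simp only
            linarith
      _ = u N + ε/2 * δ := by
          rw [integral_add (hmaxint N) (integrableOn_const hvol),
            setIntegral_const, Real.volume_real_Ioo_of_le hδ.le, sub_zero,
            smul_eq_mul, mul_comm]
  have hεδ : (0:ℝ) < ε/2 * δ := by positivity
  filter_upwards [hu0.eventually_lt_const hεδ] with N hN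
  calc ‖(N:ℝ)⁻¹ • ∑ n ∈ Finset.Ioc 0 N, g f ((n:ℝ) * δ) - L‖
      ≤ δ⁻¹ * (u N + ε/2 * δ) := hnorm_le N
    _ < δ⁻¹ * (ε/2 * δ + ε/2 * δ) := by
        apply mul_lt_mul_of_pos_left (by linarith) (inv_pos.2 hδ)
    _ = ε := by field_simp; ring


theorem tauberian {a : ℕ → V} {L : V} {C ε' : ℝ} (hC : 0 ≤ C)
    (hlip : ∀ j n : ℕ, 0 < j → j ≤ n → ‖a n - a j‖ ≤ C * ((n:ℝ) - j) / j)
    {N₀ : ℕ} (havg : ∀ N, N₀ ≤ N → ‖(N:ℝ)⁻¹ • ∑ n ∈ Finset.Ioc 0 N, a n - L‖ < ε')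
    {m : ℕ} (hm : 0 < m) :
    ∀ j : ℕ, N₀ ≤ j → 0 < j →
      ‖a j - L‖ ≤ C/(m:ℝ) + C/(j:ℝ) + (2*(m:ℝ)+1) * ε' := by
  intro j hjN hj0
  have hε'0 : 0 ≤ ε' := le_trans (norm_nonneg _) (havg j hjN).le
  set K := j / m + 1 with hK
  have hK0 : 0 < K := Nat.succ_pos _
  have hKpos : (0:ℝ) < (K:ℝ) := Nat.cast_pos.2 hK0
  have hKne : ((K:ℕ):ℝ) ≠ 0 := hKpos.ne'
  have hjpos : (0:ℝ) < (j:ℝ) := Nat.cast_pos.2 hj0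
  have hjne : ((j:ℕ):ℝ) ≠ 0 := hjpos.ne'
  have hjKne : (((j+K:ℕ)):ℝ) ≠ 0 := Nat.cast_ne_zero.2 (by omega)
  have hmpos : (0:ℝ) < (m:ℝ) := Nat.cast_pos.2 hm
  have hjmK : (j:ℝ) ≤ (m:ℝ) * (K:ℝ) := by
    have h1 : j ≤ m * K := by
      calc j = m * (j/m) + j % m := (Nat.div_add_mod j m).symm
        _ ≤ m * (j/m) + m := Nat.add_le_add_left (Nat.mod_lt j hm).le _
        _ = m * K := by rw [hK, Nat.mul_add, Nat.mul_one]
    exact_mod_cast h1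
  have hKle : (K:ℝ) ≤ (j:ℝ)/(m:ℝ) + 1 := by
    have h2 : ((j/m : ℕ):ℝ) ≤ (j:ℝ)/(m:ℝ) := Nat.cast_div_le
    rw [hK]; push_cast; linarith
  have hcard : (Finset.Ioc j (j+K)).card = K := by simp
  -- window average closeness to a j
  have hwin1 : ‖a j - (K:ℝ)⁻¹ • ∑ n ∈ Finset.Ioc j (j+K), a n‖ ≤ C * (K:ℝ) / (j:ℝ) := by
    have heq : a j - (K:ℝ)⁻¹ • ∑ n ∈ Finset.Ioc j (j+K), a n
        = (K:ℝ)⁻¹ • ∑ n ∈ Finset.Ioc j (j+K), (a j - a n) := by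
      rw [Finset.sum_sub_distrib, Finset.sum_const, hcard, smul_sub,
        ← Nat.cast_smul_eq_nsmul ℝ, smul_smul, inv_mul_cancel₀ hKne, one_smul]
    rw [heq, norm_smul, Real.norm_eq_abs, abs_of_nonneg (by positivity)]
    have hsum : ‖∑ n ∈ Finset.Ioc j (j+K), (a j - a n)‖ ≤ (K:ℝ) * (C * (K:ℝ) / (j:ℝ)) := by
      calc ‖∑ n ∈ Finset.Ioc j (j+K), (a j - a n)‖
          ≤ ∑ n ∈ Finset.Ioc j (j+K), ‖a j - a n‖ := norm_sum_le _ _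
        _ ≤ ∑ _n ∈ Finset.Ioc j (j+K), C * (K:ℝ) / (j:ℝ) := by
            apply Finset.sum_le_sum
            intro n hn
            obtain ⟨hn1, hn2⟩ := Finset.mem_Ioc.1 hn
            rw [norm_sub_rev]
            refine (hlip j n hj0 hn1.le).trans ?_
            have hnj : (n:ℝ) - (j:ℝ) ≤ (K:ℝ) := by
              have : (n:ℝ) ≤ ((j:ℝ) + (K:ℝ)) := by exact_mod_cast hn2
              linarith
            gcongr
        _ = (K:ℝ) * (C * (K:ℝ) / (j:ℝ)) := by
            rw [Finset.sum_const, hcard, nsmul_eq_mul]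
    calc (K:ℝ)⁻¹ * ‖∑ n ∈ Finset.Ioc j (j+K), (a j - a n)‖
        ≤ (K:ℝ)⁻¹ * ((K:ℝ) * (C * (K:ℝ) / (j:ℝ))) :=
          mul_le_mul_of_nonneg_left hsum (by positivity)
      _ = C * (K:ℝ) / (j:ℝ) := by field_simp
  -- window average closeness to L
  have hwin2 : ‖(K:ℝ)⁻¹ • ∑ n ∈ Finset.Ioc j (j+K), a n - L‖ ≤ (2*(m:ℝ)+1) * ε' := by
    have hsplit : ∑ n ∈ Finset.Ioc j (j+K), a n
        = (∑ n ∈ Finset.Ioc 0 (j+K), a n) - ∑ n ∈ Finset.Ioc 0 j, a n := by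
      rw [eq_sub_iff_add_eq, add_comm]
      exact Finset.sum_Ioc_consecutive _ (Nat.zero_le j) (Nat.le_add_right j K)
    have hidentity : (K:ℝ)⁻¹ • ∑ n ∈ Finset.Ioc j (j+K), a n - L
        = (K:ℝ)⁻¹ • ((((j+K:ℕ)):ℝ) • (((j+K:ℕ):ℝ)⁻¹ • ∑ n ∈ Finset.Ioc 0 (j+K), a n - L))
          - (K:ℝ)⁻¹ • ((j:ℝ) • ((j:ℝ)⁻¹ • ∑ n ∈ Finset.Ioc 0 j, a n - L)) := by
      rw [hsplit]
      match_scalars <;> push_cast <;> field_simp <;> try ring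
    rw [hidentity]
    have h1 := (havg (j+K) (le_trans hjN (Nat.le_add_right j K))).le
    have h2 := (havg j hjN).le
    calc ‖(K:ℝ)⁻¹ • ((((j+K:ℕ)):ℝ) • (((j+K:ℕ):ℝ)⁻¹ • ∑ n ∈ Finset.Ioc 0 (j+K), a n - L))
          - (K:ℝ)⁻¹ • ((j:ℝ) • ((j:ℝ)⁻¹ • ∑ n ∈ Finset.Ioc 0 j, a n - L))‖
        ≤ ‖(K:ℝ)⁻¹ • ((((j+K:ℕ)):ℝ) • (((j+K:ℕ):ℝ)⁻¹ • ∑ n ∈ Finset.Ioc 0 (j+K), a n - L))‖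
          + ‖(K:ℝ)⁻¹ • ((j:ℝ) • ((j:ℝ)⁻¹ • ∑ n ∈ Finset.Ioc 0 j, a n - L))‖ := norm_sub_le _ _
      _ ≤ (K:ℝ)⁻¹ * ((((j+K:ℕ)):ℝ) * ε') + (K:ℝ)⁻¹ * ((j:ℝ) * ε') := by
          rw [norm_smul, norm_smul, norm_smul, norm_smul]
          simp only [Real.norm_eq_abs]
          rw [abs_of_nonneg (by positivity : (0:ℝ) ≤ (K:ℝ)⁻¹),
            abs_of_nonneg (by positivity : (0:ℝ) ≤ (((j+K:ℕ)):ℝ)),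
            abs_of_nonneg (by positivity : (0:ℝ) ≤ ((j:ℕ):ℝ))]
          gcongr
      _ = ((j:ℝ) + (K:ℝ) + (j:ℝ)) * ε' * (K:ℝ)⁻¹ := by push_cast; ring
      _ ≤ ((2*(m:ℝ)+1) * (K:ℝ)) * ε' * (K:ℝ)⁻¹ := by
          gcongr
          nlinarith
      _ = (2*(m:ℝ)+1) * ε' := by field_simp
  have htri : ‖a j - L‖ ≤ ‖a j - (K:ℝ)⁻¹ • ∑ n ∈ Finset.Ioc j (j+K), a n‖
      + ‖(K:ℝ)⁻¹ • ∑ n ∈ Finset.Ioc j (j+K), a n - L‖ := by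
    have := norm_add_le (a j - (K:ℝ)⁻¹ • ∑ n ∈ Finset.Ioc j (j+K), a n)
      ((K:ℝ)⁻¹ • ∑ n ∈ Finset.Ioc j (j+K), a n - L)
    rwa [sub_add_sub_cancel] at this
  have hKj : C * (K:ℝ) / (j:ℝ) ≤ C/(m:ℝ) + C/(j:ℝ) := by
    have h5 : C * (K:ℝ) / (j:ℝ) ≤ C * ((j:ℝ)/(m:ℝ)+1) / (j:ℝ) := by gcongr
    have h6 : C * ((j:ℝ)/(m:ℝ)+1) / (j:ℝ) = C/(m:ℝ) + C/(j:ℝ) := by field_simp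
    linarith
  linarith [htri, hwin1, hwin2, hKj]


end Stmt14Aux

theorem stmt14 {V : Type*} [NormedAddCommGroup V] [NormedSpace ℝ V]
    [CompleteSpace V] [SecondCountableTopology V]
    (f : ℝ → V) (hmeas : StronglyMeasurable f)
    (M : ℝ) (hbd : ∀ x, ‖f x‖ ≤ M)
    (L : V)
    (hess : ∀ ε > (0:ℝ), ∃ δ > (0:ℝ),
      ∀ᵐ t ∂(volume.restrict (Set.Ioo (0:ℝ) δ)),
        limsup (fun b : ℝ => ‖b⁻¹ • ∑ n ∈ Finset.Ioc 0 ⌊b⌋₊, f (n * t) - L‖) atTop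
          < ε) :
    Tendsto (fun b : ℝ => b⁻¹ • ∫ x in Set.Icc (0:ℝ) b, f x) atTop (𝓝 L) := by
  have hM : 0 ≤ M := le_trans (norm_nonneg _) (hbd 0)
  have hgoal_eq : ∀ b : ℝ, b⁻¹ • ∫ x in Set.Icc (0:ℝ) b, f x = Stmt14Aux.g f b := by
    intro b; rw [Stmt14Aux.g, Stmt14Aux.F, integral_Icc_eq_integral_Ioc]
  simp only [hgoal_eq]
  rw [Metric.tendsto_atTop]
  intro η hη
  -- choose m
  obtain ⟨m', hm'⟩ := exists_nat_gt (16*M/η)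
  set m : ℕ := m' + 1 with hmdef
  have hm0 : 0 < m := Nat.succ_pos _
  have hmposR : (0:ℝ) < (m:ℝ) := Nat.cast_pos.2 hm0
  have hmgt : 16*M/η < (m:ℝ) := by
    have : (m':ℝ) < (m:ℝ) := by exact_mod_cast Nat.lt_succ_self m'
    linarith
  have hm16 : 16*M < (m:ℝ) * η := (div_lt_iff₀ hη).1 hmgt
  have hmM : 2*M/(m:ℝ) < η/8 := by
    rw [div_lt_iff₀ hmposR]; linarith
  -- choose ε' and δ
  set ε' : ℝ := η/(8*(2*(m:ℝ)+1)) with hε'def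
  have hε'pos : 0 < ε' := by positivity
  obtain ⟨δ, hδpos, hae⟩ := hess (ε'/2) (by positivity)
  have hB := Stmt14Aux.stepB f hmeas hbd L hε'pos hδpos hae
  obtain ⟨N₀, hN₀⟩ := eventually_atTop.1 hB
  -- Lipschitz property of the sampled sequence
  have hlip : ∀ j n : ℕ, 0 < j → j ≤ n →
      ‖Stmt14Aux.g f ((n:ℝ)*δ) - Stmt14Aux.g f ((j:ℝ)*δ)‖ ≤ (2*M) * ((n:ℝ) - j) / j := by
    intro j n hj hjn
    have hjposR : (0:ℝ) < (j:ℝ) := Nat.cast_pos.2 hj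
    have hjpos : (0:ℝ) < (j:ℝ)*δ := mul_pos hjposR hδpos
    have hle : (j:ℝ)*δ ≤ (n:ℝ)*δ := by
      have : (j:ℝ) ≤ (n:ℝ) := by exact_mod_cast hjn
      nlinarith
    have h := Stmt14Aux.g_lip hmeas hbd hjpos hle
    refine h.trans_eq ?_
    field_simp
  have htau := Stmt14Aux.tauberian (C := 2*M) (by positivity) hlip
    (fun N hN => hN₀ N hN) hm0
  -- final assembly
  refine ⟨((max N₀ m : ℕ):ℝ)*δ + δ, fun b hb => ?_⟩
  set J : ℕ := max N₀ m with hJdef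
  have hbpos : 0 < b := lt_of_lt_of_le (by positivity) hb
  set j : ℕ := ⌊b/δ⌋₊ with hjdef
  have hjge : J ≤ j := by
    apply Nat.le_floor
    rw [le_div_iff₀ hδpos]
    calc ((J:ℕ):ℝ)*δ ≤ ((J:ℕ):ℝ)*δ + δ := by linarith
      _ ≤ b := hb
  have hj0 : 0 < j := lt_of_lt_of_le (lt_of_lt_of_le hm0 (le_max_right N₀ m)) hjge
  have hjN₀ : N₀ ≤ j := le_trans (le_max_left N₀ m) hjge
  have hjm : m ≤ j := le_trans (le_max_right N₀ m) hjge
  have hjposR : (0:ℝ) < (j:ℝ) := Nat.cast_pos.2 hj0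
  have hjmR : (m:ℝ) ≤ (j:ℝ) := Nat.cast_le.2 hjm
  -- the sampled point bound
  have hsample : ‖Stmt14Aux.g f ((j:ℝ)*δ) - L‖ ≤ 3*(η/8) := by
    have h := htau j hjN₀ hj0
    have e1 : 2*M/(j:ℝ) ≤ 2*M/(m:ℝ) := by
      apply div_le_div_of_nonneg_left (by positivity) hmposR hjmR
    have e2 : (2*(m:ℝ)+1) * ε' = η/8 := by
      rw [hε'def]; field_simp
    calc ‖Stmt14Aux.g f ((j:ℝ)*δ) - L‖ ≤ 2*M/(m:ℝ) + 2*M/(j:ℝ) + (2*(m:ℝ)+1) * ε' := h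
      _ ≤ η/8 + η/8 + η/8 := by
          rw [e2]; exact add_le_add (add_le_add hmM.le (e1.trans hmM.le)) le_rfl
      _ = 3*(η/8) := by ring
  -- compare g f b with g f (jδ)
  have hjδb : (j:ℝ)*δ ≤ b := by
    have h1 : (j:ℝ) ≤ b/δ := Nat.floor_le (by positivity)
    calc (j:ℝ)*δ ≤ (b/δ)*δ := by nlinarith
      _ = b := by field_simp
  have hbj1 : b ≤ ((j:ℝ)+1)*δ := by
    have h2 : b/δ < (j:ℝ)+1 := Nat.lt_floor_add_one _
    calc b = (b/δ)*δ := by field_simp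
      _ ≤ ((j:ℝ)+1)*δ := by nlinarith
  have hclose : ‖Stmt14Aux.g f b - Stmt14Aux.g f ((j:ℝ)*δ)‖ ≤ η/8 := by
    have h := Stmt14Aux.g_lip hmeas hbd (mul_pos hjposR hδpos) hjδb
    have e3 : 2*M*(b - (j:ℝ)*δ)/((j:ℝ)*δ) ≤ 2*M*δ/((j:ℝ)*δ) := by
      gcongr
      linarith
    have e4 : 2*M*δ/((j:ℝ)*δ) = 2*M/(j:ℝ) := by
      field_simp
    have e5 : 2*M/(j:ℝ) ≤ 2*M/(m:ℝ) := by
      apply div_le_div_of_nonneg_left (by positivity) hmposR hjmR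
    calc ‖Stmt14Aux.g f b - Stmt14Aux.g f ((j:ℝ)*δ)‖ ≤ 2*M*(b - (j:ℝ)*δ)/((j:ℝ)*δ) := h
      _ ≤ 2*M*δ/((j:ℝ)*δ) := e3
      _ = 2*M/(j:ℝ) := e4
      _ ≤ 2*M/(m:ℝ) := e5
      _ ≤ η/8 := hmM.le
  rw [dist_eq_norm]
  have htri : ‖Stmt14Aux.g f b - L‖ ≤ ‖Stmt14Aux.g f b - Stmt14Aux.g f ((j:ℝ)*δ)‖
      + ‖Stmt14Aux.g f ((j:ℝ)*δ) - L‖ := by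
    have := norm_add_le (Stmt14Aux.g f b - Stmt14Aux.g f ((j:ℝ)*δ))
      (Stmt14Aux.g f ((j:ℝ)*δ) - L)
    rwa [sub_add_sub_cancel] at this
  calc ‖Stmt14Aux.g f b - L‖ ≤ η/8 + 3*(η/8) := le_trans htri (add_le_add hclose hsample)
    _ < η := by linarith
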